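/- For every real number s, with C(s) = 2·s·arsinh(s/2) − 2·√(s² + 4) + 4, one has C(s) ≤ 2·s·arsinh(s/2) ≤ 2·C(s). -/

import Mathlib

/-- The Legendre conjugate of `C*(σ) = 4 cosh(σ/2) - 4`. -/
noncomputable def Cfun (s : ℝ) : ℝ :=
  2 * s * Real.arsinh (s / 2) - 2 * Real.sqrt (s ^ 2 + 4) + 4

lemma aux_sinh_le (u : ℝ) (hu : 0 ≤ u) : Real.sinh u ≤ u * Real.cosh u := by
  have hd : ∀ x : ℝ, HasDerivAt (fun x : ℝ => x * Real.cosh x - Real.sinh x)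
      (x * Real.sinh x) x := by
    intro x
    have h1 : HasDerivAt (fun x : ℝ => x * Real.cosh x)
        (1 * Real.cosh x + x * Real.sinh x) x :=
      (hasDerivAt_id x).mul (Real.hasDerivAt_cosh x)
    have h2 : HasDerivAt (fun x : ℝ => x * Real.cosh x - Real.sinh x)
        (1 * Real.cosh x + x * Real.sinh x - Real.cosh x) x := h1.sub (Real.hasDerivAt_sinh x)
    convert h2 using 1
    ring
  have hmono : MonotoneOn (fun x : ℝ => x * Real.cosh x - Real.sinh x) (Set.Ici 0) := by
    apply monotoneOn_of_deriv_nonneg (convex_Ici 0)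
    · exact (Continuous.sub (continuous_id.mul Real.continuous_cosh)
        Real.continuous_sinh).continuousOn
    · intro x hx
      exact (hd x).differentiableAt.differentiableWithinAt
    · intro x hx
      simp only [interior_Ici, Set.mem_Ioi] at hx
      rw [(hd x).deriv]
      exact mul_nonneg hx.le (Real.sinh_pos_iff.2 hx).le
  have := hmono (Set.self_mem_Ici) (Set.mem_Ici.2 hu) hu
  simpa using this

lemma aux_key_nonneg (u : ℝ) (hu : 0 ≤ u) :
    2 * Real.cosh u - 2 ≤ u * Real.sinh u := by
  have hd : ∀ x : ℝ, HasDerivAt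
      (fun x : ℝ => x * Real.sinh x - (2 * Real.cosh x - 2))
      (x * Real.cosh x - Real.sinh x) x := by
    intro x
    have h1 : HasDerivAt (fun x : ℝ => x * Real.sinh x)
        (1 * Real.sinh x + x * Real.cosh x) x :=
      (hasDerivAt_id x).mul (Real.hasDerivAt_sinh x)
    have h2 : HasDerivAt (fun x : ℝ => 2 * Real.cosh x - 2)
        (2 * Real.sinh x) x := by
      simpa using ((Real.hasDerivAt_cosh x).const_mul 2).sub_const 2
    have h3 : HasDerivAt (fun x : ℝ => x * Real.sinh x - (2 * Real.cosh x - 2))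
        (1 * Real.sinh x + x * Real.cosh x - 2 * Real.sinh x) x := h1.sub h2
    convert h3 using 1
    ring
  have hmono : MonotoneOn
      (fun x : ℝ => x * Real.sinh x - (2 * Real.cosh x - 2)) (Set.Ici 0) := by
    apply monotoneOn_of_deriv_nonneg (convex_Ici 0)
    · exact (Continuous.sub (continuous_id.mul Real.continuous_sinh)
        ((continuous_const.mul Real.continuous_cosh).sub continuous_const)).continuousOn
    · intro x hx
      exact (hd x).differentiableAt.differentiableWithinAt
    · intro x hx
      simp only [interior_Ici, Set.mem_Ioi] at hx
      rw [(hd x).deriv]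
      linarith [aux_sinh_le x hx.le]
  have := hmono (Set.self_mem_Ici) (Set.mem_Ici.2 hu) hu
  simp only [Real.sinh_zero, Real.cosh_zero] at this
  linarith [this]

lemma aux_key (u : ℝ) : 2 * Real.cosh u - 2 ≤ u * Real.sinh u := by
  rcases le_or_gt 0 u with h | h
  · exact aux_key_nonneg u h
  · have := aux_key_nonneg (-u) (by linarith)
    simpa using this

theorem Cfun_le_mul_deriv_le_two_Cfun (s : ℝ) :
    Cfun s ≤ 2 * s * Real.arsinh (s / 2) ∧ 2 * s * Real.arsinh (s / 2) ≤ 2 * Cfun s := by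
  have hsq : Real.sqrt (s ^ 2 + 4) = 2 * Real.sqrt (1 + (s / 2) ^ 2) := by
    rw [show s ^ 2 + 4 = 4 * (1 + (s / 2) ^ 2) by ring, Real.sqrt_mul (by norm_num),
      show (4 : ℝ) = 2 ^ 2 by norm_num, Real.sqrt_sq (by norm_num : (0:ℝ) ≤ 2)]
  set u := Real.arsinh (s / 2) with hu
  have hsinh : Real.sinh u = s / 2 := Real.sinh_arsinh _
  have hcosh : Real.cosh u = Real.sqrt (1 + (s / 2) ^ 2) := Real.cosh_arsinh _
  constructor
  · have h2 : (2 : ℝ) ≤ Real.sqrt (s ^ 2 + 4) := by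
      have : Real.sqrt 4 ≤ Real.sqrt (s ^ 2 + 4) :=
        Real.sqrt_le_sqrt (by nlinarith [sq_nonneg s])
      have h4 : Real.sqrt 4 = 2 := by
        rw [show (4:ℝ) = 2^2 by norm_num, Real.sqrt_sq (by norm_num : (0:ℝ) ≤ 2)]
      linarith
    simp only [Cfun, ← hu]
    linarith
  · have key := aux_key u
    rw [hsinh] at key
    simp only [Cfun, ← hu]
    rw [hsq, ← hcosh]
    nlinarith [key]
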